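/- Let −∞ < a < b ≤ ∞ and let h, φ : (a, b) → ℝ, with I(λ) := ∫_a^b φ(x) e^{−λ h(x)} dx. Assume: (i) h(x) > h(a⁺) := lim_{x→a⁺} h(x) =: h_a for all x ∈ (a,b), and for every δ > 0, inf_{x ∈ [a+δ, b)} (h(x) − h_a) > 0; (ii) h is differentiable and φ is continuous on a right neighborhood of a; (iii) there exist real constants μ > 0, α > 0, a_0 > 0, b_0 ≠ 0 such that, as x → a⁺, h(x) − h_a = a_0 (x−a)^μ (1 + o(1)), φ(x) = b_0 (x−a)^{α−1} (1 + o(1)), and h'(x) = μ a_0 (x−a)^{μ−1} (1 + o(1)); (iv) ∫_a^b |φ(x)| e^{−λ h(x)} dx < ∞ for all sufficiently large λ. Then, as λ → ∞, λ^{α/μ} e^{λ h_a} I(λ) → Γ(α/μ) · b_0 / (μ a_0^{α/μ}). -/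

import Mathlib

open MeasureTheory Filter
open scoped Topology

private lemma laplace_aux_int {p q b : ℝ} (hp : 0 < p) (hq : -1 < q) (hb : 0 < b) :
    IntegrableOn (fun x : ℝ => x ^ q * Real.exp (-b * x ^ p)) (Set.Ioi 0) := by
  have h1 : IntegrableOn (fun y : ℝ => y ^ ((q+1)/p - 1) * Real.exp (-b * y)) (Set.Ioi 0) := by
    have h0 : -1 < (q+1)/p - 1 := by
      have : 0 < (q+1)/p := div_pos (by linarith) hp
      linarith
    have := integrableOn_rpow_mul_exp_neg_mul_rpow (p := 1) h0 one_pos hb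
    exact this.congr_fun (fun x hx => by beta_reduce; rw [Real.rpow_one]) measurableSet_Ioi
  have h2 := (integrableOn_Ioi_comp_rpow_iff'
      (fun y : ℝ => y ^ ((q+1)/p - 1) * Real.exp (-b * y)) hp.ne').mpr h1
  refine h2.congr_fun (fun x hx => ?_) measurableSet_Ioi
  have hx0 : (0:ℝ) < x := hx
  beta_reduce
  rw [smul_eq_mul, ← Real.rpow_mul hx0.le, ← mul_assoc, ← Real.rpow_add hx0]
  congr 2
  field_simp
  ring

private lemma laplace_aux_aesm {G : ℝ → ℝ} (hG : AEStronglyMeasurable G volume) (a c : ℝ)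
    (hc : c ≠ 0) : AEStronglyMeasurable (fun s => G (a + c * s)) volume := by
  have hqmp : Measure.QuasiMeasurePreserving (fun s : ℝ => a + c * s) volume volume := by
    refine ⟨by fun_prop, ?_⟩
    have hcomp : (fun s : ℝ => a + c * s) = (fun x : ℝ => a + x) ∘ (fun s : ℝ => c * s) := rfl
    rw [hcomp, ← Measure.map_map (by fun_prop) (by fun_prop), Real.map_volume_mul_left hc,
      Measure.map_smul, map_add_left_eq_self]
    exact Measure.smul_absolutelyContinuous
  exact hG.comp_quasiMeasurePreserving hqmp

theorem endpoint_laplace (a : ℝ) (b : EReal) (hab : (a : EReal) < b)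
    (h φ : ℝ → ℝ) (hA : ℝ)
    (hlim : Tendsto h (nhdsWithin a (Set.Ioi a)) (𝓝 hA))
    (hgt : ∀ x : ℝ, a < x → (x : EReal) < b → hA < h x)
    (hinf : ∀ δ > 0, ∃ c > 0, ∀ x : ℝ, a + δ ≤ x → (x : EReal) < b → c ≤ h x - hA)
    (ε : ℝ) (hε : 0 < ε)
    (hdiff : ∀ x ∈ Set.Ioo a (a + ε), DifferentiableAt ℝ h x)
    (hφcont : ContinuousOn φ (Set.Ioo a (a + ε)))
    (mu alpha a₀ b₀ : ℝ) (hmu : 0 < mu) (halpha : 0 < alpha) (ha₀ : 0 < a₀) (hb₀ : b₀ ≠ 0)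
    (hh_asymp : Tendsto (fun x => (h x - hA) / (a₀ * (x - a) ^ mu))
      (nhdsWithin a (Set.Ioi a)) (𝓝 1))
    (hφ_asymp : Tendsto (fun x => φ x / (b₀ * (x - a) ^ (alpha - 1)))
      (nhdsWithin a (Set.Ioi a)) (𝓝 1))
    (hh'_asymp : Tendsto (fun x => deriv h x / (mu * a₀ * (x - a) ^ (mu - 1)))
      (nhdsWithin a (Set.Ioi a)) (𝓝 1))
    (lam0 : ℝ)
    (hint : ∀ l : ℝ, lam0 ≤ l →
      IntegrableOn (fun x => φ x * Real.exp (-l * h x))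
        {x : ℝ | a < x ∧ (x : EReal) < b} volume) :
    Tendsto (fun l : ℝ =>
        l ^ (alpha / mu) * Real.exp (l * hA) *
          ∫ x in {x : ℝ | a < x ∧ (x : EReal) < b}, φ x * Real.exp (-l * h x))
      atTop (𝓝 (Real.Gamma (alpha / mu) * b₀ / (mu * a₀ ^ (alpha / mu)))) := by
  clear hlim hgt hh'_asymp
  set S : Set ℝ := {x : ℝ | a < x ∧ (x : EReal) < b} with hSdef
  have hSmeas : MeasurableSet S := by
    have : S = Set.Ioi a ∩ ((↑) : ℝ → EReal) ⁻¹' (Set.Iio b) := Set.ext fun x => Iff.rfl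
    rw [this]
    exact measurableSet_Ioi.inter (measurable_coe_real_ereal measurableSet_Iio)
  -- choose δ
  obtain ⟨δb, hδbpos, hδb⟩ : ∃ d : ℝ, 0 < d ∧ ((a + d : ℝ) : EReal) ≤ b := by
    induction b with
    | bot => exact absurd hab (by simp)
    | coe r =>
        have har : a < r := by exact_mod_cast hab
        exact ⟨r - a, by linarith, by norm_num⟩
    | top => exact ⟨1, one_pos, le_top⟩
  obtain ⟨u₁, hu₁a, hu₁⟩ : ∃ u, a < u ∧
      ∀ x ∈ Set.Ioo a u, 1/2 < (h x - hA) / (a₀ * (x - a) ^ mu) := by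
    have := hh_asymp (Ioi_mem_nhds (by norm_num : (1:ℝ)/2 < 1))
    rw [Filter.mem_map, mem_nhdsGT_iff_exists_Ioo_subset] at this
    obtain ⟨u, hu, hsub⟩ := this
    exact ⟨u, hu, fun x hx => hsub hx⟩
  obtain ⟨u₂, hu₂a, hu₂⟩ : ∃ u, a < u ∧
      ∀ x ∈ Set.Ioo a u, φ x / (b₀ * (x - a) ^ (alpha - 1)) ∈ Set.Ioo 0 2 := by
    have := hφ_asymp (Ioo_mem_nhds (by norm_num : (0:ℝ) < 1) (by norm_num : (1:ℝ) < 2))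
    rw [Filter.mem_map, mem_nhdsGT_iff_exists_Ioo_subset] at this
    obtain ⟨u, hu, hsub⟩ := this
    exact ⟨u, hu, fun x hx => hsub hx⟩
  set δ : ℝ := min (min (u₁ - a) (u₂ - a)) (min ε δb) with hδdef
  have hδpos : 0 < δ := by
    refine lt_min (lt_min (by linarith) (by linarith)) (lt_min hε hδbpos)
  have hδε : δ ≤ ε := le_trans (min_le_right _ _) (min_le_left _ _)
  have hδδb : δ ≤ δb := le_trans (min_le_right _ _) (min_le_right _ _)
  have hδu₁ : a + δ ≤ u₁ := by
    have h1 : δ ≤ u₁ - a := le_trans (min_le_left _ _) (min_le_left _ _)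
    linarith
  have hδu₂ : a + δ ≤ u₂ := by
    have h1 : δ ≤ u₂ - a := le_trans (min_le_left _ _) (min_le_right _ _)
    linarith
  have hδbE : ((a + δ : ℝ) : EReal) ≤ b :=
    le_trans (by exact_mod_cast (by linarith : a + δ ≤ a + δb)) hδb
  have hIooS : Set.Ioo a (a + δ) ⊆ S := by
    intro x hx
    refine ⟨hx.1, lt_of_lt_of_le ?_ hδbE⟩
    exact_mod_cast hx.2
  -- pointwise bounds near a
  have hhb : ∀ x ∈ Set.Ioo a (a + δ), a₀/2 * (x - a) ^ mu ≤ h x - hA := by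
    intro x hx
    have hxa : 0 < x - a := by linarith [hx.1]
    have hpow : 0 < (x - a) ^ mu := Real.rpow_pos_of_pos hxa _
    have hratio := hu₁ x ⟨hx.1, lt_of_lt_of_le hx.2 hδu₁⟩
    have hD : 0 < a₀ * (x - a) ^ mu := mul_pos ha₀ hpow
    rw [lt_div_iff₀ hD] at hratio
    nlinarith
  have hφb : ∀ x ∈ Set.Ioo a (a + δ), |φ x| ≤ 2 * |b₀| * (x - a) ^ (alpha - 1) := by
    intro x hx
    have hxa : 0 < x - a := by linarith [hx.1]
    have hpow : 0 < (x - a) ^ (alpha - 1) := Real.rpow_pos_of_pos hxa _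
    have hD : b₀ * (x - a) ^ (alpha - 1) ≠ 0 := mul_ne_zero hb₀ hpow.ne'
    have hratio := hu₂ x ⟨hx.1, lt_of_lt_of_le hx.2 hδu₂⟩
    have hφx : φ x = (φ x / (b₀ * (x - a) ^ (alpha - 1))) * (b₀ * (x - a) ^ (alpha - 1)) :=
      (div_mul_cancel₀ _ hD).symm
    rw [hφx, abs_mul, abs_of_pos hratio.1, abs_mul, abs_of_pos hpow]
    calc (φ x / (b₀ * (x - a) ^ (alpha - 1))) * (|b₀| * (x - a) ^ (alpha - 1))
        ≤ 2 * (|b₀| * (x - a) ^ (alpha - 1)) :=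
          mul_le_mul_of_nonneg_right hratio.2.le (by positivity)
      _ = 2 * |b₀| * (x - a) ^ (alpha - 1) := by ring
  -- the shifted integrand and key algebraic identities
  have hgeq : ∀ l x : ℝ, Real.exp (l * hA) * (φ x * Real.exp (-l * h x))
      = φ x * Real.exp (-(l * (h x - hA))) := by
    intro l x
    rw [show -(l * (h x - hA)) = l * hA + -l * h x from by ring, Real.exp_add]
    ring
  have key1 : ∀ l : ℝ, 0 < l →
      l ^ ((alpha - 1)/mu) * (l ^ (-(1/mu))) ^ (alpha - 1) = 1 := by
    intro l hl
    rw [← Real.rpow_mul hl.le, ← Real.rpow_add hl,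
      show (alpha - 1)/mu + -(1/mu) * (alpha - 1) = 0 from by ring, Real.rpow_zero]
  have key2 : ∀ l : ℝ, 0 < l → l * (l ^ (-(1/mu))) ^ mu = 1 := by
    intro l hl
    rw [← Real.rpow_mul hl.le, show -(1/mu) * mu = -1 from by field_simp,
      Real.rpow_neg_one, mul_inv_cancel₀ hl.ne']
  -- measurability of the indicator integrand
  have hGaesm : ∀ l : ℝ, AEStronglyMeasurable
      ((Set.Ioo a (a + δ)).indicator (fun x => φ x * Real.exp (-(l * (h x - hA))))) volume := by
    intro l
    rw [aestronglyMeasurable_indicator_iff measurableSet_Ioo]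
    have hsub : Set.Ioo a (a + δ) ⊆ Set.Ioo a (a + ε) := Set.Ioo_subset_Ioo le_rfl (by linarith)
    have hhc : ContinuousOn h (Set.Ioo a (a + δ)) := fun x hx =>
      ((hdiff x (hsub hx)).continuousAt).continuousWithinAt
    have : ContinuousOn (fun x => φ x * Real.exp (-(l * (h x - hA)))) (Set.Ioo a (a + δ)) :=
      (hφcont.mono hsub).mul (Real.continuous_exp.comp_continuousOn
        ((continuousOn_const.mul (hhc.sub continuousOn_const)).neg))
    exact this.aestronglyMeasurable measurableSet_Ioo
  -- change of variables for the main part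
  have hchg : ∀ l : ℝ, 0 < l →
      (∫ s : ℝ, l ^ ((alpha - 1)/mu) * (Set.Ioo a (a + δ)).indicator
          (fun x => φ x * Real.exp (-(l * (h x - hA)))) (a + l ^ (-(1/mu)) * s))
        = l ^ (alpha/mu) * ∫ x in Set.Ioo a (a + δ), φ x * Real.exp (-(l * (h x - hA))) := by
    intro l hl
    have hc : 0 < l ^ (-(1/mu)) := Real.rpow_pos_of_pos hl _
    rw [integral_const_mul]
    rw [Measure.integral_comp_mul_left
      (fun y => (Set.Ioo a (a + δ)).indicator
        (fun x => φ x * Real.exp (-(l * (h x - hA)))) (a + y)) (l ^ (-(1/mu)))]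
    rw [integral_add_left_eq_self
      ((Set.Ioo a (a + δ)).indicator (fun x => φ x * Real.exp (-(l * (h x - hA))))) a]
    rw [integral_indicator measurableSet_Ioo, smul_eq_mul, abs_of_pos (inv_pos.mpr hc)]
    have hcinv : (l ^ (-(1/mu)))⁻¹ = l ^ (1/mu) := by
      rw [Real.rpow_neg hl.le, inv_inv]
    rw [hcinv, ← mul_assoc, ← Real.rpow_add hl, ← add_div, sub_add_cancel]
  -- dominated convergence for the main part
  have hboundint : Integrable ((Set.Ioi (0:ℝ)).indicator
      (fun s => 2 * |b₀| * (s ^ (alpha - 1) * Real.exp (-(a₀/2) * s ^ mu)))) volume := by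
    rw [integrable_indicator_iff measurableSet_Ioi]
    exact (laplace_aux_int hmu (by linarith) (by positivity)).const_mul _
  have hFmeas : ∀ᶠ l : ℝ in atTop, AEStronglyMeasurable
      (fun s : ℝ => l ^ ((alpha - 1)/mu) * (Set.Ioo a (a + δ)).indicator
        (fun x => φ x * Real.exp (-(l * (h x - hA)))) (a + l ^ (-(1/mu)) * s)) volume := by
    filter_upwards [eventually_gt_atTop (0:ℝ)] with l hl
    exact (laplace_aux_aesm (hGaesm l) a _ (Real.rpow_pos_of_pos hl _).ne').const_mul _
  have hbound : ∀ᶠ l : ℝ in atTop, ∀ᵐ s : ℝ,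
      ‖l ^ ((alpha - 1)/mu) * (Set.Ioo a (a + δ)).indicator
        (fun x => φ x * Real.exp (-(l * (h x - hA)))) (a + l ^ (-(1/mu)) * s)‖
      ≤ (Set.Ioi (0:ℝ)).indicator
          (fun s => 2 * |b₀| * (s ^ (alpha - 1) * Real.exp (-(a₀/2) * s ^ mu))) s := by
    filter_upwards [eventually_gt_atTop (0:ℝ)] with l hl
    refine ae_of_all _ fun s => ?_
    have hc : 0 < l ^ (-(1/mu)) := Real.rpow_pos_of_pos hl _
    by_cases hmem : a + l ^ (-(1/mu)) * s ∈ Set.Ioo a (a + δ)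
    · have hcs : 0 < l ^ (-(1/mu)) * s := by have := hmem.1; linarith
      have hs : 0 < s := by nlinarith
      have hxa : a + l ^ (-(1/mu)) * s - a = l ^ (-(1/mu)) * s := by ring
      have hp1 : l ^ ((alpha - 1)/mu) * (l ^ (-(1/mu)) * s) ^ (alpha - 1) = s ^ (alpha - 1) := by
        rw [Real.mul_rpow hc.le hs.le, ← mul_assoc, key1 l hl, one_mul]
      have hp2 : l * (l ^ (-(1/mu)) * s) ^ mu = s ^ mu := by
        rw [Real.mul_rpow hc.le hs.le, ← mul_assoc, key2 l hl, one_mul]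
      have hφle : |φ (a + l ^ (-(1/mu)) * s)| ≤ 2 * |b₀| * (l ^ (-(1/mu)) * s) ^ (alpha - 1) := by
        have := hφb _ hmem; rwa [hxa] at this
      have hhle : a₀/2 * (l ^ (-(1/mu)) * s) ^ mu ≤ h (a + l ^ (-(1/mu)) * s) - hA := by
        have := hhb _ hmem; rwa [hxa] at this
      have hexple : Real.exp (-(l * (h (a + l ^ (-(1/mu)) * s) - hA)))
          ≤ Real.exp (-(a₀/2) * s ^ mu) := by
        apply Real.exp_le_exp.mpr
        have h1 : a₀/2 * s ^ mu ≤ l * (h (a + l ^ (-(1/mu)) * s) - hA) := by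
          have h2 := mul_le_mul_of_nonneg_left hhle hl.le
          have h3 : l * (a₀/2 * (l ^ (-(1/mu)) * s) ^ mu) = a₀/2 * s ^ mu := by
            rw [show l * (a₀/2 * (l ^ (-(1/mu)) * s) ^ mu)
                = a₀/2 * (l * (l ^ (-(1/mu)) * s) ^ mu) from by ring, hp2]
          linarith
        linarith
      rw [Set.indicator_of_mem hmem, Set.indicator_of_mem (Set.mem_Ioi.mpr hs),
        Real.norm_eq_abs, abs_mul, abs_of_nonneg (Real.rpow_nonneg hl.le _), abs_mul,
        abs_of_pos (Real.exp_pos _)]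
      calc l ^ ((alpha - 1)/mu) * (|φ (a + l ^ (-(1/mu)) * s)|
            * Real.exp (-(l * (h (a + l ^ (-(1/mu)) * s) - hA))))
          ≤ l ^ ((alpha - 1)/mu) * ((2 * |b₀| * (l ^ (-(1/mu)) * s) ^ (alpha - 1))
            * Real.exp (-(a₀/2) * s ^ mu)) := by
            apply mul_le_mul_of_nonneg_left _ (Real.rpow_nonneg hl.le _)
            exact mul_le_mul hφle hexple (Real.exp_pos _).le (by positivity)
        _ = 2 * |b₀| * (s ^ (alpha - 1) * Real.exp (-(a₀/2) * s ^ mu)) := by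
            rw [show l ^ ((alpha - 1)/mu) * ((2 * |b₀| * (l ^ (-(1/mu)) * s) ^ (alpha - 1))
                * Real.exp (-(a₀/2) * s ^ mu))
              = 2 * |b₀| * ((l ^ ((alpha - 1)/mu) * (l ^ (-(1/mu)) * s) ^ (alpha - 1))
                * Real.exp (-(a₀/2) * s ^ mu)) from by ring, hp1]
    · rw [Set.indicator_of_notMem hmem, mul_zero, norm_zero]
      refine Set.indicator_nonneg (fun t ht => ?_) s
      have ht0 : (0:ℝ) < t := ht
      positivity
  have hae : ∀ᵐ s : ℝ, Tendsto (fun l : ℝ => l ^ ((alpha - 1)/mu)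
      * (Set.Ioo a (a + δ)).indicator
        (fun x => φ x * Real.exp (-(l * (h x - hA)))) (a + l ^ (-(1/mu)) * s)) atTop
      (𝓝 ((Set.Ioi (0:ℝ)).indicator
        (fun s => b₀ * (s ^ (alpha - 1) * Real.exp (-(a₀ * s ^ mu)))) s)) := by
    have h0 : ∀ᵐ s : ℝ, s ≠ (0:ℝ) := by
      rw [ae_iff]
      have : {s : ℝ | ¬ s ≠ 0} = {0} := by ext t; simp
      rw [this]
      exact measure_singleton 0
    filter_upwards [h0] with s hs
    rcases lt_or_gt_of_ne hs with hneg | hpos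
    · have hev : ∀ᶠ l : ℝ in atTop, l ^ ((alpha - 1)/mu)
          * (Set.Ioo a (a + δ)).indicator
            (fun x => φ x * Real.exp (-(l * (h x - hA)))) (a + l ^ (-(1/mu)) * s) = 0 := by
        filter_upwards [eventually_gt_atTop (0:ℝ)] with l hl
        have hc : 0 < l ^ (-(1/mu)) := Real.rpow_pos_of_pos hl _
        have hnm : a + l ^ (-(1/mu)) * s ∉ Set.Ioo a (a + δ) := by
          intro hmem
          have := hmem.1
          nlinarith
        rw [Set.indicator_of_notMem hnm, mul_zero]
      have hfl0 : (Set.Ioi (0:ℝ)).indicator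
          (fun s => b₀ * (s ^ (alpha - 1) * Real.exp (-(a₀ * s ^ mu)))) s = 0 :=
        Set.indicator_of_notMem (by simp [Set.mem_Ioi]; linarith) _
      rw [hfl0]
      exact Tendsto.congr' (hev.mono fun l hl => hl.symm) tendsto_const_nhds
    · -- s > 0
      have hxt : Tendsto (fun l : ℝ => a + l ^ (-(1/mu)) * s) atTop (𝓝[>] a) := by
        rw [tendsto_nhdsWithin_iff]
        constructor
        · have h1 : Tendsto (fun l : ℝ => l ^ (-(1/mu))) atTop (𝓝 0) :=
            tendsto_rpow_neg_atTop (by positivity)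
          have h2 := (h1.mul_const s).const_add a
          simpa using h2
        · filter_upwards [eventually_gt_atTop (0:ℝ)] with l hl
          have : 0 < l ^ (-(1/mu)) * s := mul_pos (Real.rpow_pos_of_pos hl _) hpos
          simpa using this
      have hevx : ∀ᶠ l : ℝ in atTop, a + l ^ (-(1/mu)) * s ∈ Set.Ioo a (a + δ) :=
        hxt (Ioo_mem_nhdsGT_of_mem ⟨le_rfl, by linarith⟩)
      have hratφ : Tendsto (fun l : ℝ => φ (a + l ^ (-(1/mu)) * s)
          / (b₀ * ((a + l ^ (-(1/mu)) * s) - a) ^ (alpha - 1))) atTop (𝓝 1) :=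
        hφ_asymp.comp hxt
      have hrath : Tendsto (fun l : ℝ => (h (a + l ^ (-(1/mu)) * s) - hA)
          / (a₀ * ((a + l ^ (-(1/mu)) * s) - a) ^ mu)) atTop (𝓝 1) :=
        hh_asymp.comp hxt
      have T1 : Tendsto (fun l : ℝ =>
          (φ (a + l ^ (-(1/mu)) * s) / (b₀ * ((a + l ^ (-(1/mu)) * s) - a) ^ (alpha - 1))
            * (b₀ * s ^ (alpha - 1)))
          * Real.exp (-((h (a + l ^ (-(1/mu)) * s) - hA)
              / (a₀ * ((a + l ^ (-(1/mu)) * s) - a) ^ mu) * (a₀ * s ^ mu)))) atTop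
          (𝓝 ((1 * (b₀ * s ^ (alpha - 1))) * Real.exp (-(1 * (a₀ * s ^ mu))))) :=
        (hratφ.mul_const _).mul ((Real.continuous_exp.tendsto _).comp ((hrath.mul_const _).neg))
      have hlimval : (1 * (b₀ * s ^ (alpha - 1))) * Real.exp (-(1 * (a₀ * s ^ mu)))
          = (Set.Ioi (0:ℝ)).indicator
            (fun s => b₀ * (s ^ (alpha - 1) * Real.exp (-(a₀ * s ^ mu)))) s := by
        rw [Set.indicator_of_mem (Set.mem_Ioi.mpr hpos), one_mul, one_mul]
        ring
      rw [← hlimval]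
      refine Tendsto.congr' ?_ T1
      filter_upwards [hevx, eventually_gt_atTop (0:ℝ)] with l hmem hl
      have hc : 0 < l ^ (-(1/mu)) := Real.rpow_pos_of_pos hl _
      have hcs : 0 < l ^ (-(1/mu)) * s := mul_pos hc hpos
      have hxa : a + l ^ (-(1/mu)) * s - a = l ^ (-(1/mu)) * s := by ring
      have hp1 : l ^ ((alpha - 1)/mu) * (l ^ (-(1/mu)) * s) ^ (alpha - 1) = s ^ (alpha - 1) := by
        rw [Real.mul_rpow hc.le hpos.le, ← mul_assoc, key1 l hl, one_mul]
      have hp2 : l * (l ^ (-(1/mu)) * s) ^ mu = s ^ mu := by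
        rw [Real.mul_rpow hc.le hpos.le, ← mul_assoc, key2 l hl, one_mul]
      have hDφ : b₀ * (l ^ (-(1/mu)) * s) ^ (alpha - 1) ≠ 0 :=
        mul_ne_zero hb₀ (Real.rpow_pos_of_pos hcs _).ne'
      have hDh : a₀ * (l ^ (-(1/mu)) * s) ^ mu ≠ 0 :=
        mul_ne_zero ha₀.ne' (Real.rpow_pos_of_pos hcs _).ne'
      rw [Set.indicator_of_mem hmem]
      simp only [hxa]
      have hexp2 : (h (a + l ^ (-(1/mu)) * s) - hA) / (a₀ * (l ^ (-(1/mu)) * s) ^ mu)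
          * (a₀ * s ^ mu) = l * (h (a + l ^ (-(1/mu)) * s) - hA) := by
        rw [show a₀ * s ^ mu = (a₀ * (l ^ (-(1/mu)) * s) ^ mu) * l from by
          rw [show (a₀ * (l ^ (-(1/mu)) * s) ^ mu) * l
            = a₀ * (l * (l ^ (-(1/mu)) * s) ^ mu) from by ring, hp2],
          ← mul_assoc, div_mul_cancel₀ _ hDh]
        ring
      rw [hexp2, div_mul_eq_mul_div, div_mul_eq_mul_div, div_eq_iff hDφ, ← hp1]
      ring
  have hmainT := tendsto_integral_filter_of_dominated_convergence (μ := volume)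
    ((Set.Ioi (0:ℝ)).indicator (fun s => 2 * |b₀| * (s ^ (alpha - 1)
      * Real.exp (-(a₀/2) * s ^ mu)))) hFmeas hbound hboundint hae
  -- value of the limit integral
  have hval : (∫ s : ℝ, (Set.Ioi (0:ℝ)).indicator
      (fun s => b₀ * (s ^ (alpha - 1) * Real.exp (-(a₀ * s ^ mu)))) s)
      = Real.Gamma (alpha / mu) * b₀ / (mu * a₀ ^ (alpha / mu)) := by
    rw [integral_indicator measurableSet_Ioi, integral_const_mul]
    have h1 : ∀ s ∈ Set.Ioi (0:ℝ), s ^ (alpha - 1) * Real.exp (-(a₀ * s ^ mu))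
        = s ^ (alpha - 1) * Real.exp (-a₀ * s ^ mu) := by
      intro s _; rw [neg_mul]
    rw [setIntegral_congr_fun measurableSet_Ioi h1,
      integral_rpow_mul_exp_neg_mul_rpow hmu (by linarith) ha₀,
      show alpha - 1 + 1 = alpha from by ring,
      show -alpha / mu = -(alpha/mu) from by ring, Real.rpow_neg ha₀.le]
    have h2 : a₀ ^ (alpha/mu) ≠ 0 := (Real.rpow_pos_of_pos ha₀ _).ne'
    field_simp
  -- integrability of the shifted integrand on S
  have hgint : ∀ l : ℝ, lam0 ≤ l →
      IntegrableOn (fun x => φ x * Real.exp (-(l * (h x - hA)))) S volume := by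
    intro l hl
    exact IntegrableOn.congr_fun ((hint l hl).const_mul (Real.exp (l * hA)))
      (fun x _ => hgeq l x) hSmeas
  have hKint : IntegrableOn (fun x => |φ x| * Real.exp (-(lam0 * (h x - hA)))) S volume := by
    refine IntegrableOn.congr_fun (((hint lam0 le_rfl).norm).const_mul (Real.exp (lam0 * hA)))
      (fun x _ => ?_) hSmeas
    rw [Real.norm_eq_abs, abs_mul, abs_of_pos (Real.exp_pos _),
      show -(lam0 * (h x - hA)) = lam0 * hA + -lam0 * h x from by ring, Real.exp_add]
    ring
  set K : ℝ := ∫ x in S, |φ x| * Real.exp (-(lam0 * (h x - hA))) with hKdef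
  set T' : Set ℝ := S ∩ Set.Ici (a + δ) with hT'def
  have hT'meas : MeasurableSet T' := hSmeas.inter measurableSet_Ici
  have hT'S : T' ⊆ S := Set.inter_subset_left
  obtain ⟨c₀, hc₀pos, hc₀⟩ := hinf δ hδpos
  have hunion : S = Set.Ioo a (a + δ) ∪ T' := by
    ext x
    constructor
    · intro hx
      by_cases hlt : x < a + δ
      · exact Or.inl ⟨hx.1, hlt⟩
      · exact Or.inr ⟨hx, not_lt.mp hlt⟩
    · rintro (hx | hx)
      · exact hIooS hx
      · exact hx.1
  have hsplit : ∀ l : ℝ, lam0 ≤ l →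
      (∫ x in S, φ x * Real.exp (-(l * (h x - hA))))
        = (∫ x in Set.Ioo a (a + δ), φ x * Real.exp (-(l * (h x - hA))))
          + ∫ x in T', φ x * Real.exp (-(l * (h x - hA))) := by
    intro l hl
    have hdisj : Disjoint (Set.Ioo a (a + δ)) T' := by
      rw [Set.disjoint_left]
      rintro x hx ⟨_, hx2⟩
      exact absurd hx.2 (not_lt.mpr hx2)
    rw [show (∫ x in S, φ x * Real.exp (-(l * (h x - hA))))
        = ∫ x in Set.Ioo a (a + δ) ∪ T', φ x * Real.exp (-(l * (h x - hA))) from by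
          rw [← hunion]]
    exact setIntegral_union hdisj hT'meas
      ((hgint l hl).mono_set (hunion ▸ Set.subset_union_left))
      ((hgint l hl).mono_set hT'S)
  -- tail bound
  have htb : ∀ l : ℝ, lam0 ≤ l →
      |∫ x in T', φ x * Real.exp (-(l * (h x - hA)))|
        ≤ Real.exp (-((l - lam0) * c₀)) * K := by
    intro l hl
    have h1 : |∫ x in T', φ x * Real.exp (-(l * (h x - hA)))|
        ≤ ∫ x in T', |φ x| * Real.exp (-(l * (h x - hA))) := by
      simpa [Real.norm_eq_abs, abs_mul, abs_of_pos (Real.exp_pos _)]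
        using norm_integral_le_integral_norm
        (μ := volume.restrict T') (fun x => φ x * Real.exp (-(l * (h x - hA))))
    have hIl : IntegrableOn (fun x => |φ x| * Real.exp (-(l * (h x - hA)))) T' volume := by
      refine IntegrableOn.congr_fun (((hgint l hl).mono_set hT'S)).abs
        (fun x _ => ?_) hT'meas
      rw [abs_mul, abs_of_pos (Real.exp_pos _)]
    have hIr : IntegrableOn (fun x => Real.exp (-((l - lam0) * c₀))
        * (|φ x| * Real.exp (-(lam0 * (h x - hA))))) T' volume :=
      (hKint.mono_set hT'S).const_mul _
    have h2 : (∫ x in T', |φ x| * Real.exp (-(l * (h x - hA))))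
        ≤ ∫ x in T', Real.exp (-((l - lam0) * c₀))
            * (|φ x| * Real.exp (-(lam0 * (h x - hA)))) := by
      refine setIntegral_mono_on hIl hIr hT'meas fun x hx => ?_
      have hc₀x : c₀ ≤ h x - hA := hc₀ x hx.2 hx.1.2
      have hee : Real.exp (-((l - lam0) * (h x - hA))) ≤ Real.exp (-((l - lam0) * c₀)) := by
        apply Real.exp_le_exp.mpr
        apply neg_le_neg
        exact mul_le_mul_of_nonneg_left hc₀x (by linarith)
      rw [show -(l * (h x - hA)) = -((l - lam0) * (h x - hA)) + -(lam0 * (h x - hA)) from by ring,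
        Real.exp_add]
      calc |φ x| * (Real.exp (-((l - lam0) * (h x - hA)))
            * Real.exp (-(lam0 * (h x - hA))))
          ≤ |φ x| * (Real.exp (-((l - lam0) * c₀)) * Real.exp (-(lam0 * (h x - hA)))) := by
            apply mul_le_mul_of_nonneg_left _ (abs_nonneg _)
            exact mul_le_mul_of_nonneg_right hee (Real.exp_pos _).le
        _ = Real.exp (-((l - lam0) * c₀)) * (|φ x| * Real.exp (-(lam0 * (h x - hA)))) := by
            ring
    have h3 : (∫ x in T', Real.exp (-((l - lam0) * c₀))
        * (|φ x| * Real.exp (-(lam0 * (h x - hA)))))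
        = Real.exp (-((l - lam0) * c₀))
          * ∫ x in T', |φ x| * Real.exp (-(lam0 * (h x - hA))) := integral_const_mul _ _
    have h4 : (∫ x in T', |φ x| * Real.exp (-(lam0 * (h x - hA)))) ≤ K := by
      refine setIntegral_mono_set hKint (ae_of_all _ fun x => by positivity)
        (HasSubset.Subset.eventuallyLE hT'S)
    calc |∫ x in T', φ x * Real.exp (-(l * (h x - hA)))|
        ≤ ∫ x in T', |φ x| * Real.exp (-(l * (h x - hA))) := h1
      _ ≤ ∫ x in T', Real.exp (-((l - lam0) * c₀))
            * (|φ x| * Real.exp (-(lam0 * (h x - hA)))) := h2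
      _ = Real.exp (-((l - lam0) * c₀))
            * ∫ x in T', |φ x| * Real.exp (-(lam0 * (h x - hA))) := h3
      _ ≤ Real.exp (-((l - lam0) * c₀)) * K :=
          mul_le_mul_of_nonneg_left h4 (Real.exp_pos _).le
  have htail : Tendsto (fun l : ℝ => l ^ (alpha/mu)
      * ∫ x in T', φ x * Real.exp (-(l * (h x - hA)))) atTop (𝓝 0) := by
    have hb0 : Tendsto (fun l : ℝ => (K * Real.exp (lam0 * c₀))
        * (l ^ (alpha/mu) * Real.exp (-c₀ * l))) atTop (𝓝 0) := by
      have := (tendsto_rpow_mul_exp_neg_mul_atTop_nhds_zero (alpha/mu) c₀ hc₀pos).const_mul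
        (K * Real.exp (lam0 * c₀))
      simpa using this
    refine squeeze_zero_norm' ?_ hb0
    filter_upwards [eventually_ge_atTop (max lam0 0)] with l hl
    have hl0 : (0:ℝ) ≤ l := le_trans (le_max_right _ _) hl
    have hll : lam0 ≤ l := le_trans (le_max_left _ _) hl
    rw [Real.norm_eq_abs, abs_mul, abs_of_nonneg (Real.rpow_nonneg hl0 _)]
    calc l ^ (alpha/mu) * |∫ x in T', φ x * Real.exp (-(l * (h x - hA)))|
        ≤ l ^ (alpha/mu) * (Real.exp (-((l - lam0) * c₀)) * K) :=
          mul_le_mul_of_nonneg_left (htb l hll) (Real.rpow_nonneg hl0 _)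
      _ = (K * Real.exp (lam0 * c₀)) * (l ^ (alpha/mu) * Real.exp (-c₀ * l)) := by
          rw [show -((l - lam0) * c₀) = lam0 * c₀ + -c₀ * l from by ring, Real.exp_add]
          ring
  -- assembly
  have hfinal := hmainT.add htail
  rw [add_zero, hval] at hfinal
  refine Tendsto.congr' ?_ hfinal
  filter_upwards [eventually_ge_atTop (max lam0 1)] with l hl
  have hll : lam0 ≤ l := le_trans (le_max_left _ _) hl
  have hl0 : (0:ℝ) < l := lt_of_lt_of_le one_pos (le_trans (le_max_right _ _) hl)
  have hS1 : Real.exp (l * hA) * ∫ x in S, φ x * Real.exp (-l * h x)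
      = ∫ x in S, φ x * Real.exp (-(l * (h x - hA))) := by
    rw [← integral_const_mul]
    exact setIntegral_congr_fun hSmeas fun x _ => hgeq l x
  calc (∫ s : ℝ, l ^ ((alpha - 1)/mu) * (Set.Ioo a (a + δ)).indicator
          (fun x => φ x * Real.exp (-(l * (h x - hA)))) (a + l ^ (-(1/mu)) * s))
        + l ^ (alpha/mu) * ∫ x in T', φ x * Real.exp (-(l * (h x - hA)))
      = l ^ (alpha/mu) * ((∫ x in Set.Ioo a (a + δ), φ x * Real.exp (-(l * (h x - hA))))
          + ∫ x in T', φ x * Real.exp (-(l * (h x - hA)))) := by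
        rw [hchg l hl0]
        ring
    _ = l ^ (alpha/mu) * ∫ x in S, φ x * Real.exp (-(l * (h x - hA))) := by
        rw [← hsplit l hll]
    _ = l ^ (alpha/mu) * Real.exp (l * hA) * ∫ x in S, φ x * Real.exp (-l * h x) := by
        rw [mul_assoc, hS1]
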